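/- For natural numbers μ, M, K with 1 ≤ μ ≤ M ≤ K, the following inequality of real numbers holds: C(K,μ) · ( C(K+M−μ−1, M−μ) / C(K+M−1, M) )² ≤ M^{2μ}/K^{μ}. -/

import Mathlib

/-- For natural numbers `1 ≤ μ ≤ M ≤ K`,
`C(K,μ) · (C(K+M-μ-1, M-μ) / C(K+M-1, M))² ≤ M^(2μ)/K^μ`. -/
theorem statement14 (μ M K : ℕ) (h1 : 1 ≤ μ) (h2 : μ ≤ M) (h3 : M ≤ K) :
    (Nat.choose K μ : ℝ) *
        ((Nat.choose (K + M - μ - 1) (M - μ) : ℝ) / (Nat.choose (K + M - 1) M : ℝ)) ^ 2 ≤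
      (M : ℝ) ^ (2 * μ) / (K : ℝ) ^ μ := by
  have hK1 : 1 ≤ K := le_trans (h1.trans h2) h3
  have hMle : M ≤ K + M - 1 := by omega
  -- subset identity
  have hid : (K+M-1).choose M * M.choose μ = (K+M-1).choose μ * (K+M-μ-1).choose (M-μ) := by
    have h := Nat.choose_mul (n := K+M-1) (k := M) (s := μ) h2
    have hxy : K + M - 1 - μ = K + M - μ - 1 := by omega
    rw [hxy] at h
    exact h
  have hpos1 : 0 < (K+M-1).choose M := Nat.choose_pos hMle
  have hpos2 : 0 < (K+M-1).choose μ := Nat.choose_pos (by omega)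
  have hpos1R : (0:ℝ) < ((K+M-1).choose M : ℝ) := by exact_mod_cast hpos1
  have hpos2R : (0:ℝ) < ((K+M-1).choose μ : ℝ) := by exact_mod_cast hpos2
  have hKpow : (0:ℝ) < (K:ℝ) ^ μ := by positivity
  -- ratio equality
  have hratio : ((K+M-μ-1).choose (M-μ) : ℝ) / ((K+M-1).choose M : ℝ)
      = (M.choose μ : ℝ) / ((K+M-1).choose μ : ℝ) := by
    rw [div_eq_div_iff hpos1R.ne' hpos2R.ne']
    have h' : (K+M-μ-1).choose (M-μ) * (K+M-1).choose μ
        = M.choose μ * (K+M-1).choose M := by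
      rw [mul_comm, mul_comm (M.choose μ)]; exact hid.symm
    exact_mod_cast h'
  -- key nat inequality
  have h4 : M.choose μ * K ^ μ ≤ M ^ μ * (K+M-1).choose μ := by
    have hfac : 0 < (Nat.factorial μ) := Nat.factorial_pos μ
    refine Nat.le_of_mul_le_mul_left ?_ hfac
    calc (Nat.factorial μ) * (M.choose μ * K ^ μ) = M.descFactorial μ * K ^ μ := by
          rw [Nat.descFactorial_eq_factorial_mul_choose]; ring
      _ ≤ M ^ μ * (K+M-1).descFactorial μ := by
          refine Nat.mul_le_mul (Nat.descFactorial_le_pow M μ) ?_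
          calc K ^ μ ≤ (K + M - 1 + 1 - μ) ^ μ :=
                Nat.pow_le_pow_left (by omega) μ
            _ ≤ (K+M-1).descFactorial μ := Nat.pow_sub_le_descFactorial _ μ
      _ = (Nat.factorial μ) * (M ^ μ * (K+M-1).choose μ) := by
          rw [Nat.descFactorial_eq_factorial_mul_choose]; ring
  have h5 : K.choose μ ≤ K ^ μ :=
    le_trans (Nat.le_mul_of_pos_left _ (Nat.factorial_pos μ))
      (by rw [← Nat.descFactorial_eq_factorial_mul_choose]; exact Nat.descFactorial_le_pow K μ)
  -- real bound on ratio
  have hr : ((M.choose μ : ℝ)) / ((K+M-1).choose μ : ℝ) ≤ (M:ℝ)^μ / (K:ℝ)^μ := by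
    rw [div_le_div_iff₀ hpos2R hKpow]
    exact_mod_cast h4
  have hrnn : (0:ℝ) ≤ ((M.choose μ : ℝ)) / ((K+M-1).choose μ : ℝ) := by positivity
  rw [hratio]
  calc (K.choose μ : ℝ) * ((M.choose μ : ℝ) / ((K+M-1).choose μ : ℝ)) ^ 2
      ≤ (K:ℝ)^μ * ((M:ℝ)^μ / (K:ℝ)^μ) ^ 2 := by
        refine mul_le_mul (by exact_mod_cast h5) (pow_le_pow_left₀ hrnn hr 2)
          (by positivity) (by positivity)
    _ = (M:ℝ) ^ (2*μ) / (K:ℝ)^μ := by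
        rw [mul_comm 2 μ, pow_mul]
        field_simp
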